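/- Let A be an SPD linear map on a finite-dimensional real inner product space V of dimension n, let b, x₀ ∈ V, and let p₀, …, p_{n−1} be nonzero, pairwise A-orthogonal vectors that span V. Define r_j := b − A x_j, α_j := ⟪p_j, r_j⟫ / ⟪p_j, A p_j⟫, and x_{j+1} := x_j + α_j p_j. Then the conjugate directions method terminates with the exact solution after n steps: x_n = A⁻¹ b. -/

import Mathlib

open scoped RealInnerProductSpace

/-- The conjugate directions method terminates with the exact solution after
`n` steps when the `n` nonzero, pairwise A-orthogonal directions span the
`n`-dimensional space. -/
theorem conjugate_directions_termination
    {V : Type*} [NormedAddCommGroup V] [InnerProductSpace ℝ V] [FiniteDimensional ℝ V]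
    (A : V →ₗ[ℝ] V)
    (hsym : ∀ u v : V, ⟪A u, v⟫ = ⟪u, A v⟫)
    (hpos : ∀ v : V, v ≠ 0 → 0 < ⟪A v, v⟫)
    (b x₀ xstar : V) (hxstar : A xstar = b)
    (n : ℕ) (hdim : Module.finrank ℝ V = n)
    (p : ℕ → V)
    (hpne : ∀ j, j < n → p j ≠ 0)
    (horth : ∀ j, j < n → ∀ k, k < n → j ≠ k → ⟪A (p j), p k⟫ = 0)
    (hspan : Submodule.span ℝ {v : V | ∃ j, j < n ∧ v = p j} = ⊤)
    (x : ℕ → V) (hx0 : x 0 = x₀)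
    (hxrec : ∀ j, x (j + 1) =
      x j + (⟪p j, b - A (x j)⟫ / ⟪p j, A (p j)⟫) • p j) :
    x n = xstar := by
  -- key: for all m ≤ n and k < m, ⟪p k, A (x m - xstar)⟫ = 0
  have key : ∀ m, m ≤ n → ∀ k, k < m → ⟪p k, A (x m - xstar)⟫ = 0 := by
    intro m
    induction m with
    | zero => intro _ k hk; omega
    | succ m ih =>
      intro hm k hk
      have hmn : m < n := hm
      have hpm : ⟪p m, A (p m)⟫ > 0 := by
        rw [← hsym]; exact hpos (p m) (hpne m hmn)
      have hb : b - A (x m) = -(A (x m - xstar)) := by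
        rw [map_sub, hxstar]; abel
      have hstep : A (x (m + 1) - xstar)
          = A (x m - xstar) + (⟪p m, b - A (x m)⟫ / ⟪p m, A (p m)⟫) • A (p m) := by
        rw [hxrec m, add_sub_right_comm, map_add, map_smul]
      rw [hstep, inner_add_right, real_inner_smul_right]
      rcases eq_or_lt_of_le (Nat.lt_succ_iff.mp hk) with hkm | hkm
      · subst hkm
        rw [hb, inner_neg_right]
        field_simp
        ring
      · have h0 : ⟪p k, A (p m)⟫ = 0 := by
          rw [← hsym]
          exact horth k (lt_trans hkm hmn) m hmn (by omega)
        rw [h0, ih (le_of_lt hm) k hkm]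
        ring
  -- now A (x n - xstar) is orthogonal to everything
  set w := A (x n - xstar) with hw
  have hall : ∀ v : V, ⟪w, v⟫ = 0 := by
    intro v
    have hv : v ∈ Submodule.span ℝ {v : V | ∃ j, j < n ∧ v = p j} := by
      rw [hspan]; trivial
    induction hv using Submodule.span_induction with
    | mem v hvmem =>
      obtain ⟨j, hj, rfl⟩ := hvmem
      rw [real_inner_comm]
      exact key n le_rfl j hj
    | zero => simp
    | add u v _ _ hu hv => rw [inner_add_right, hu, hv]; ring
    | smul c u _ hu => rw [real_inner_smul_right, hu]; ring
  by_contra hne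
  have hne' : x n - xstar ≠ 0 := sub_ne_zero.mpr hne
  have := hpos (x n - xstar) hne'
  rw [← hw] at this
  rw [hall (x n - xstar)] at this
  exact lt_irrefl 0 this
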